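/- Let n ≥ 2. The total Lebesgue volume of all 2^n peaks of the cross polytope equals vol(O_n)/(n-1); equivalently, the cross polytope with all peaks P = O_n ∪ ⋃_{s ∈ {-1,1}^n} peak_s satisfies vol(P) = (n/(n-1))·vol(O_n) = 2^n/((n-1)·(n-1)!). -/

import Mathlib

open MeasureTheory Set ENNReal

/-- The cross polytope `O_n`: the convex hull of `{±e_i : i ∈ [n]}`. -/
noncomputable def crossPolytope (n : ℕ) : Set (Fin n → ℝ) :=
  convexHull ℝ ((Set.range fun i : Fin n => Pi.single i (1 : ℝ)) ∪
    (Set.range fun i : Fin n => Pi.single i (-1 : ℝ)))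

/-- The set of sign vectors `{-1,1}^n`, indexing the facets of the cross polytope. -/
def Signs (n : ℕ) : Set (Fin n → ℝ) := {s | ∀ i, s i = 1 ∨ s i = -1}

/-- The peak attached to the facet `F_s = conv{s_i e_i}`, namely
`conv(F_s ∪ {s/(n-1)})`. -/
noncomputable def peak (n : ℕ) (s : Fin n → ℝ) : Set (Fin n → ℝ) :=
  convexHull ℝ ((Set.range fun i : Fin n => Pi.single i (s i)) ∪ {((n : ℝ) - 1)⁻¹ • s})

/-! ### Auxiliary material -/

/-- The solid corner simplex `conv({0} ∪ {e_i})`. -/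
noncomputable def stdCorner (n : ℕ) : Set (Fin n → ℝ) :=
  convexHull ℝ ({0} ∪ Set.range fun i : Fin n => Pi.single i (1 : ℝ))

theorem volB (n : ℕ) (hn : 1 ≤ n) :
    volume {x : Fin n → ℝ | ∑ i, |x i| ≤ 1} = ENNReal.ofReal (2 ^ n / n.factorial) := by
  have : Nonempty (Fin n) := ⟨⟨0, hn⟩⟩
  have h := MeasureTheory.volume_sum_rpow_le (ι := Fin n) (p := 1) le_rfl 1
  simp only [Real.rpow_one, one_div, inv_one, div_one, Real.rpow_natCast] at h
  rw [show ((1:ℝ) + 1) = 2 by norm_num, Real.Gamma_two,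
    Real.Gamma_nat_eq_factorial] at h
  simpa [Fintype.card_fin, mul_one] using h

theorem stdCorner_eq (n : ℕ) :
    stdCorner n = {x : Fin n → ℝ | (∀ i, 0 ≤ x i) ∧ ∑ i, x i ≤ 1} := by
  apply Subset.antisymm
  · apply convexHull_min
    · rintro x (rfl | ⟨i, rfl⟩)
      · exact ⟨fun i => le_rfl, by simp⟩
      · refine ⟨fun j => ?_, by simp⟩
        rcases eq_or_ne i j with rfl | h
        · simp
        · simp [Pi.single_apply, h.symm]
    · rintro x ⟨hx1, hx2⟩ y ⟨hy1, hy2⟩ a b ha hb hab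
      refine ⟨fun i => ?_, ?_⟩
      · simp only [Pi.add_apply, Pi.smul_apply, smul_eq_mul]
        have := hx1 i; have := hy1 i; positivity
      simp only [Pi.add_apply, Pi.smul_apply, smul_eq_mul]
      rw [Finset.sum_add_distrib, ← Finset.mul_sum, ← Finset.mul_sum]
      nlinarith
  · rintro x ⟨hx1, hx2⟩
    have := (convex_convexHull ℝ ({0} ∪ Set.range fun i : Fin n => Pi.single i (1 : ℝ))).sum_mem
      (t := Finset.univ) (ι := Option (Fin n))
      (w := fun o => o.elim (1 - ∑ i, x i) x)
      (z := fun o => o.elim 0 (fun i => Pi.single i 1))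
      (by rintro (_ | i) _
          · exact sub_nonneg.2 hx2
          · exact hx1 i)
      (by rw [Fintype.sum_option]; simp)
      (by rintro (_ | i) _
          · exact subset_convexHull ℝ _ (Or.inl rfl)
          · exact subset_convexHull ℝ _ (Or.inr ⟨i, rfl⟩))
    rw [Fintype.sum_option] at this
    unfold stdCorner
    simpa [← Pi.single_smul', Finset.univ_sum_single] using this

theorem crossPolytope_eq (n : ℕ) (hn : 1 ≤ n) :
    crossPolytope n = {x : Fin n → ℝ | ∑ i, |x i| ≤ 1} := by
  apply Subset.antisymm
  · apply convexHull_min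
    · have key : ∀ (i : Fin n) (c : ℝ), |c| ≤ 1 → ∑ j, |Pi.single i c j| ≤ 1 := by
        intro i c hc
        rw [Finset.sum_eq_single_of_mem i (Finset.mem_univ i)
          (fun j _ hj => by rw [Pi.single_apply, if_neg hj, abs_zero])]
        · simpa using hc
      rintro x (⟨i, rfl⟩ | ⟨i, rfl⟩)
      · exact key i 1 (by norm_num)
      · exact key i (-1) (by norm_num)
    · rintro x hx y hy a b ha hb hab
      simp only [mem_setOf_eq, Pi.add_apply, Pi.smul_apply, smul_eq_mul]
      calc ∑ i, |a * x i + b * y i| ≤ ∑ i, (a * |x i| + b * |y i|) := by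
            refine Finset.sum_le_sum fun i _ => ?_
            calc |a * x i + b * y i| ≤ |a * x i| + |b * y i| := abs_add_le _ _
              _ = a * |x i| + b * |y i| := by
                rw [abs_mul, abs_mul, abs_of_nonneg ha, abs_of_nonneg hb]
        _ = a * ∑ i, |x i| + b * ∑ i, |y i| := by
            rw [Finset.sum_add_distrib, Finset.mul_sum, Finset.mul_sum]
        _ ≤ a * 1 + b * 1 := by gcongr <;> assumption
        _ = 1 := by linarith
  · rintro x (hx : ∑ i, |x i| ≤ 1)
    set G := (Set.range fun i : Fin n => Pi.single i (1 : ℝ)) ∪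
      (Set.range fun i : Fin n => Pi.single i (-1 : ℝ)) with hG
    have h0 : (0 : Fin n → ℝ) ∈ convexHull ℝ G := by
      have i0 : Fin n := ⟨0, hn⟩
      have h1 : Pi.single i0 (1:ℝ) ∈ convexHull ℝ G := subset_convexHull ℝ _ (Or.inl ⟨i0, rfl⟩)
      have h2 : Pi.single i0 (-1:ℝ) ∈ convexHull ℝ G := subset_convexHull ℝ _ (Or.inr ⟨i0, rfl⟩)
      have := (convex_convexHull ℝ G) h1 h2 (by norm_num : (0:ℝ) ≤ 1/2)
        (by norm_num : (0:ℝ) ≤ 1/2) (by norm_num)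
      simpa [← Pi.single_smul', ← Pi.single_add] using this
    have := (convex_convexHull ℝ G).sum_mem
      (t := Finset.univ) (ι := Option (Fin n))
      (w := fun o => o.elim (1 - ∑ i, |x i|) (fun i => |x i|))
      (z := fun o => o.elim 0 (fun i => Pi.single i (if x i < 0 then (-1:ℝ) else 1)))
      (by rintro (_ | i) _
          · exact sub_nonneg.2 hx
          · exact abs_nonneg _)
      (by rw [Fintype.sum_option]; simp)
      (by rintro (_ | i) _
          · exact h0
          · by_cases h : x i < 0
            · simpa [h] using subset_convexHull ℝ G (Or.inr ⟨i, rfl⟩)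
            · simpa [h] using subset_convexHull ℝ G (Or.inl ⟨i, rfl⟩))
    rw [Fintype.sum_option] at this
    have hxe : ∀ i, |x i| • Pi.single (M := fun _ : Fin n => ℝ) i
        (if x i < 0 then (-1:ℝ) else 1) = Pi.single i (x i) := by
      intro i
      rw [← Pi.single_smul']
      by_cases h : x i < 0 <;> simp [h, abs_of_neg, abs_of_nonneg, not_lt.1, smul_eq_mul]
    simp only [hxe, Option.elim] at this
    show x ∈ convexHull ℝ G
    simpa [Finset.univ_sum_single] using this

theorem sq_signs {n : ℕ} {s : Fin n → ℝ} (hs : s ∈ Signs n) (i : Fin n) : s i * s i = 1 := by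
  rcases hs i with h | h <;> rw [h] <;> norm_num

theorem nsub_pos {n : ℕ} (hn : 2 ≤ n) : (0:ℝ) < (n:ℝ) - 1 := by
  have : (2:ℝ) ≤ (n:ℝ) := by exact_mod_cast hn
  linarith

theorem peak_subset_coord (n : ℕ) (hn : 2 ≤ n) {s : Fin n → ℝ} (hs : s ∈ Signs n) (i : Fin n) :
    peak n s ⊆ {x | 0 ≤ s i * x i} := by
  have hlin : IsLinearMap ℝ (fun x : Fin n → ℝ => s i * x i) :=
    ⟨fun x y => by simp [mul_add], fun c x => by simp [smul_eq_mul]; ring⟩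
  apply convexHull_min _ (convex_halfSpace_ge hlin 0)
  rintro x (⟨j, rfl⟩ | rfl)
  · rcases eq_or_ne i j with rfl | h
    · simp [sq_signs hs]
    · simp [Pi.single_apply, h.symm]
  · simp only [mem_setOf_eq, Pi.smul_apply, smul_eq_mul]
    rw [show s i * (((n:ℝ) - 1)⁻¹ * s i) = ((n:ℝ)-1)⁻¹ * (s i * s i) by ring, sq_signs hs]
    simp [le_of_lt (inv_pos.2 (nsub_pos hn))]

theorem peak_subset_facet (n : ℕ) (hn : 2 ≤ n) {s : Fin n → ℝ} (hs : s ∈ Signs n) :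
    peak n s ⊆ {x | 1 ≤ ∑ i, s i * x i} := by
  have hlin : IsLinearMap ℝ (fun x : Fin n → ℝ => ∑ i, s i * x i) :=
    ⟨fun x y => by simp [mul_add, Finset.sum_add_distrib],
     fun c x => by
       simp [smul_eq_mul, Finset.mul_sum]
       exact Finset.sum_congr rfl fun i _ => by ring⟩
  apply convexHull_min _ (convex_halfSpace_ge hlin 1)
  rintro x (⟨j, rfl⟩ | rfl)
  · simp only [mem_setOf_eq]
    rw [Finset.sum_eq_single_of_mem j (Finset.mem_univ j)
      (fun i _ hij => by rw [Pi.single_apply, if_neg hij, mul_zero])]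
    simp [sq_signs hs]
  · simp only [mem_setOf_eq, Pi.smul_apply, smul_eq_mul]
    have : ∀ i, s i * (((n:ℝ) - 1)⁻¹ * s i) = ((n:ℝ)-1)⁻¹ := fun i => by
      rw [show s i * (((n:ℝ) - 1)⁻¹ * s i) = ((n:ℝ)-1)⁻¹ * (s i * s i) by ring,
        sq_signs hs, mul_one]
    rw [Finset.sum_congr rfl fun i _ => this i, Finset.sum_const, Finset.card_univ,
      Fintype.card_fin, nsmul_eq_mul]
    rw [← div_eq_mul_inv, le_div_iff₀ (nsub_pos hn)]
    linarith

theorem cross_subset_facet (n : ℕ) {s : Fin n → ℝ} (hs : s ∈ Signs n) :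
    crossPolytope n ⊆ {x | ∑ i, s i * x i ≤ 1} := by
  have hlin : IsLinearMap ℝ (fun x : Fin n → ℝ => ∑ i, s i * x i) :=
    ⟨fun x y => by simp [mul_add, Finset.sum_add_distrib],
     fun c x => by
       simp [smul_eq_mul, Finset.mul_sum]
       exact Finset.sum_congr rfl fun i _ => by ring⟩
  apply convexHull_min _ (convex_halfSpace_le hlin 1)
  have key : ∀ (j : Fin n) (c : ℝ), s j * c ≤ 1 →
      (Pi.single j c : Fin n → ℝ) ∈ {x | ∑ i, s i * x i ≤ 1} := by
    intro j c hc
    simp only [mem_setOf_eq]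
    rw [Finset.sum_eq_single_of_mem j (Finset.mem_univ j)
      (fun i _ hij => by rw [Pi.single_apply, if_neg hij, mul_zero])]
    simpa using hc
  rintro x (⟨j, rfl⟩ | ⟨j, rfl⟩)
  · exact key j 1 (by rcases hs j with h | h <;> rw [h] <;> norm_num)
  · exact key j (-1) (by rcases hs j with h | h <;> rw [h] <;> norm_num)

theorem coord_hyperplane_null (n : ℕ) (i : Fin n) :
    volume {x : Fin n → ℝ | x i = 0} = 0 := by
  have : {x : Fin n → ℝ | x i = 0} =
      (LinearMap.ker (LinearMap.proj (R := ℝ) (φ := fun _ : Fin n => ℝ) i) :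
        Set (Fin n → ℝ)) := by
    ext x; simp [LinearMap.mem_ker]
  rw [this]
  apply MeasureTheory.Measure.addHaar_submodule
  intro h
  have : Pi.single i (1:ℝ) ∈
      LinearMap.ker (LinearMap.proj (R := ℝ) (φ := fun _ : Fin n => ℝ) i) := by
    rw [h]; trivial
  simp [LinearMap.mem_ker] at this

theorem facet_hyperplane_null (n : ℕ) (hn : 2 ≤ n) {s : Fin n → ℝ} (hs : s ∈ Signs n) :
    volume {x : Fin n → ℝ | ∑ i, s i * x i = 1} = 0 := by
  classical
  set f : (Fin n → ℝ) →ₗ[ℝ] ℝ :=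
    { toFun := fun x => ∑ i, s i * x i
      map_add' := fun x y => by simp [mul_add, Finset.sum_add_distrib]
      map_smul' := fun c x => by
        simp [smul_eq_mul, Finset.mul_sum]
        exact Finset.sum_congr rfl fun i _ => by ring }
  have i0 : Fin n := ⟨0, by omega⟩
  set x0 : Fin n → ℝ := Pi.single i0 (s i0) with hx0
  have hfx0 : f x0 = 1 := by
    show ∑ i, s i * x0 i = 1
    rw [Finset.sum_eq_single_of_mem i0 (Finset.mem_univ i0)
      (fun i _ hij => by rw [hx0, Pi.single_apply, if_neg hij, mul_zero])]
    simp [hx0, sq_signs hs]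
  have hset : {x : Fin n → ℝ | ∑ i, s i * x i = 1} =
      (AffineSubspace.mk' x0 (LinearMap.ker f) : Set (Fin n → ℝ)) := by
    ext x
    simp only [mem_setOf_eq, AffineSubspace.mem_coe, AffineSubspace.mem_mk',
      vsub_eq_sub, LinearMap.mem_ker, map_sub, hfx0]
    constructor
    · intro h; show f x - 1 = 0; rw [show f x = ∑ i, s i * x i from rfl, h]; ring
    · intro h; have : f x = 1 := by linarith [h]
      exact this
  rw [hset]
  apply MeasureTheory.Measure.addHaar_affineSubspace
  intro h
  have h0 : (0 : Fin n → ℝ) ∈ AffineSubspace.mk' x0 (LinearMap.ker f) := h ▸ trivial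
  rw [AffineSubspace.mem_mk'] at h0
  have : f (0 - x0) = 0 := h0
  rw [map_sub, hfx0, map_zero] at this
  norm_num at this

open Matrix in
noncomputable def peakMat (n : ℕ) (s : Fin n → ℝ) : Matrix (Fin n) (Fin n) ℝ :=
  Matrix.of fun i j => (if i = j then s j else 0) - ((n:ℝ) - 1)⁻¹ * s i

open Matrix in
theorem peakMat_det (n : ℕ) (hn : 2 ≤ n) {s : Fin n → ℝ} (hs : s ∈ Signs n) :
    |(peakMat n s).det| = ((n:ℝ) - 1)⁻¹ := by
  have hpos : (0:ℝ) < (n:ℝ) - 1 := nsub_pos hn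
  have hfac : peakMat n s = Matrix.diagonal s *
      (1 + Matrix.replicateCol (Fin 1) (fun _ => -((n:ℝ)-1)⁻¹) * Matrix.replicateRow (Fin 1) (fun _ => (1:ℝ))) := by
    ext i j
    rw [peakMat, Matrix.diagonal_mul]
    simp only [Matrix.add_apply, Matrix.mul_apply, Matrix.replicateCol_apply, Matrix.replicateRow_apply,
      Finset.sum_const, Finset.card_univ, Fintype.card_fin, one_smul, Matrix.of_apply]
    rcases eq_or_ne i j with rfl | h
    · simp [Matrix.one_apply_eq]
      ring
    · rw [Matrix.one_apply_ne h]
      simp [h]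
      ring
  rw [hfac, Matrix.det_mul, Matrix.det_diagonal]
  erw [Matrix.det_one_add_replicateCol_mul_replicateRow]
  have hdot : (fun _ : Fin n => (1:ℝ)) ⬝ᵥ (fun _ : Fin n => -((n:ℝ)-1)⁻¹)
      = -(n * ((n:ℝ)-1)⁻¹) := by
    simp [dotProduct, Finset.sum_const, Finset.card_univ]
  rw [hdot]
  have h1 : (1:ℝ) + -(n * ((n:ℝ)-1)⁻¹) = -((n:ℝ)-1)⁻¹ := by
    field_simp
    ring
  rw [h1, abs_mul, abs_neg, abs_inv, abs_of_pos hpos]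
  have : |∏ i, s i| = 1 := by
    rw [Finset.abs_prod]
    rw [Finset.prod_congr rfl fun i _ => by rcases hs i with h | h <;> rw [h] <;> norm_num]
    simp
  rw [this, one_mul]

noncomputable def peakAff (n : ℕ) (s : Fin n → ℝ) : (Fin n → ℝ) →ᵃ[ℝ] (Fin n → ℝ) :=
  (Matrix.toLin' (peakMat n s)).toAffineMap + AffineMap.const ℝ (Fin n → ℝ) (((n : ℝ) - 1)⁻¹ • s)

theorem peakAff_apply (n : ℕ) (s : Fin n → ℝ) (x : Fin n → ℝ) :
    peakAff n s x = Matrix.toLin' (peakMat n s) x + ((n : ℝ) - 1)⁻¹ • s := rfl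

theorem peak_eq_image (n : ℕ) (s : Fin n → ℝ) :
    peak n s = peakAff n s '' stdCorner n := by
  rw [stdCorner, AffineMap.image_convexHull, peak, image_union, image_singleton, union_comm]
  congr 1
  congr 1
  · simp only [peakAff_apply, map_zero, zero_add]
  · rw [← Set.range_comp]
    apply congrArg Set.range
    funext i j
    simp only [Function.comp_apply, peakAff_apply, Matrix.toLin'_apply, Matrix.mulVec_single,
      Pi.add_apply, Pi.smul_apply, smul_eq_mul, mul_one, peakMat, Matrix.of_apply]
    rcases eq_or_ne j i with rfl | h
    · simp [Pi.single_eq_same]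
    · simp [Pi.single_apply, h]

noncomputable def signFinset (n : ℕ) : Finset (Fin n → ℝ) :=
  Finset.image (fun b : Fin n → Bool => fun i => if b i then (1:ℝ) else -1) Finset.univ

theorem signFinset_inj (n : ℕ) : Function.Injective
    (fun b : Fin n → Bool => fun i : Fin n => if b i then (1:ℝ) else -1) := by
  intro b b' h
  funext i
  have := congrFun h i
  by_cases hb : b i <;> by_cases hb' : b' i
  · rw [hb, hb']
  · exfalso; simp only at this; rw [if_pos hb, if_neg hb'] at this; norm_num at this
  · exfalso; simp only at this; rw [if_neg hb, if_pos hb'] at this; norm_num at this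
  · rw [Bool.not_eq_true] at hb hb'; rw [hb, hb']

theorem coe_signFinset (n : ℕ) : (signFinset n : Set (Fin n → ℝ)) = Signs n := by
  ext s
  simp only [signFinset, Finset.coe_image, Finset.coe_univ, image_univ, mem_range, Signs,
    mem_setOf_eq]
  constructor
  · rintro ⟨b, rfl⟩ i; by_cases h : b i <;> simp [h]
  · intro h
    refine ⟨fun i => if s i = 1 then true else false, funext fun i => ?_⟩
    rcases h i with h' | h' <;> simp [h']
    · norm_num

theorem card_signFinset (n : ℕ) : (signFinset n).card = 2 ^ n := by
  rw [signFinset, Finset.card_image_of_injective _ (signFinset_inj n), Finset.card_univ]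
  simp

theorem stdCorner_compact (n : ℕ) : IsCompact (stdCorner n) := by
  apply Set.Finite.isCompact_convexHull
  exact (Set.finite_singleton _).union (Set.finite_range _)

theorem abs_signs {n : ℕ} {s : Fin n → ℝ} (hs : s ∈ Signs n) (i : Fin n) : |s i| = 1 := by
  rcases hs i with h | h <;> rw [h] <;> norm_num

theorem signs_ne_zero {n : ℕ} {s : Fin n → ℝ} (hs : s ∈ Signs n) (i : Fin n) : s i ≠ 0 := by
  rcases hs i with h | h <;> rw [h] <;> norm_num

theorem diag_image_subset (n : ℕ) {s : Fin n → ℝ} (hs : s ∈ Signs n) (i : Fin n) :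
    Matrix.toLin' (Matrix.diagonal s) '' stdCorner n ⊆ {x | 0 ≤ s i * x i} := by
  rintro _ ⟨y, hy, rfl⟩
  rw [stdCorner_eq] at hy
  simp only [mem_setOf_eq, Matrix.toLin'_apply, Matrix.mulVec_diagonal]
  rw [show s i * (s i * y i) = (s i * s i) * y i by ring, sq_signs hs, one_mul]
  exact hy.1 i

theorem ball_eq_biUnion (n : ℕ) :
    {x : Fin n → ℝ | ∑ i, |x i| ≤ 1} =
      ⋃ s ∈ signFinset n, Matrix.toLin' (Matrix.diagonal s) '' stdCorner n := by
  ext x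
  simp only [mem_setOf_eq, mem_iUnion, exists_prop]
  constructor
  · intro hx
    set s : Fin n → ℝ := fun i => if x i < 0 then -1 else 1 with hsdef
    have hsS : s ∈ Signs n := fun i => by by_cases h : x i < 0 <;> simp [hsdef, h]
    refine ⟨s, ?_, fun i => |x i|, ?_, ?_⟩
    · rw [← Finset.mem_coe, coe_signFinset]; exact hsS
    · rw [stdCorner_eq]; exact ⟨fun i => abs_nonneg _, hx⟩
    · funext i
      simp only [Matrix.toLin'_apply, Matrix.mulVec_diagonal]
      by_cases h : x i < 0
      · simp [hsdef, h, abs_of_neg h]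
      · simp [hsdef, h, abs_of_nonneg (not_lt.1 h)]
  · rintro ⟨s, hsF, y, hy, rfl⟩
    have hsS : s ∈ Signs n := by rw [← coe_signFinset]; exact hsF
    rw [stdCorner_eq] at hy
    simp only [Matrix.toLin'_apply, Matrix.mulVec_diagonal]
    calc ∑ i, |s i * y i| = ∑ i, y i := by
          refine Finset.sum_congr rfl fun i _ => ?_
          rw [abs_mul, abs_signs hsS, one_mul, abs_of_nonneg (hy.1 i)]
      _ ≤ 1 := hy.2

theorem volume_diag_image (n : ℕ) {s : Fin n → ℝ} (hs : s ∈ Signs n) :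
    volume (Matrix.toLin' (Matrix.diagonal s) '' stdCorner n) = volume (stdCorner n) := by
  rw [MeasureTheory.Measure.addHaar_image_linearMap, LinearMap.det_toLin',
    Matrix.det_diagonal]
  have : |∏ i, s i| = 1 := by
    rw [Finset.abs_prod, Finset.prod_congr rfl fun i _ => abs_signs hs i]
    simp
  rw [this]
  simp

theorem volume_stdCorner (n : ℕ) (hn : 1 ≤ n) :
    volume (stdCorner n) = ENNReal.ofReal (1 / n.factorial) := by
  have hmeas : ∀ s ∈ signFinset n,
      NullMeasurableSet (Matrix.toLin' (Matrix.diagonal s) '' stdCorner n) volume := by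
    intro s _
    exact (((stdCorner_compact n).image
      (Matrix.toLin' (Matrix.diagonal s)).continuous_of_finiteDimensional).measurableSet).nullMeasurableSet
  have hdisj : Set.Pairwise (signFinset n : Set (Fin n → ℝ))
      (Function.onFun (MeasureTheory.AEDisjoint volume)
        fun s => Matrix.toLin' (Matrix.diagonal s) '' stdCorner n) := by
    intro s hsF s' hsF' hne
    have hsS : s ∈ Signs n := by rw [← coe_signFinset]; exact hsF
    have hsS' : s' ∈ Signs n := by rw [← coe_signFinset]; exact hsF'
    obtain ⟨i, hi⟩ : ∃ i, s i ≠ s' i := by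
      by_contra h
      push_neg at h
      exact hne (funext h)
    apply measure_mono_null _ (coord_hyperplane_null n i)
    rintro x ⟨hx1, hx2⟩
    have h1 := diag_image_subset n hsS i hx1
    have h2 := diag_image_subset n hsS' i hx2
    simp only [mem_setOf_eq] at h1 h2 ⊢
    rcases hsS i with h | h <;> rcases hsS' i with h' | h' <;> rw [h] at h1 <;> rw [h'] at h2 <;>
      first
        | (exfalso; exact hi (h.trans h'.symm))
        | linarith
  have hsum := measure_biUnion_finset₀ hdisj hmeas
  rw [← ball_eq_biUnion n, volB n hn] at hsum
  rw [Finset.sum_congr rfl (fun s hsF => volume_diag_image n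
    (by rw [← coe_signFinset]; exact hsF)), Finset.sum_const, card_signFinset,
    nsmul_eq_mul, Nat.cast_pow, Nat.cast_ofNat] at hsum
  have h2n : ((2:ℝ≥0∞) ^ n) ≠ 0 := by positivity
  have h2t : ((2:ℝ≥0∞) ^ n) ≠ ⊤ := by
    exact ENNReal.pow_ne_top (by norm_num)
  rw [show (2:ℝ)^n / n.factorial = 2^n * (1 / n.factorial) by ring,
    ENNReal.ofReal_mul (by positivity), ENNReal.ofReal_pow (by norm_num : (0:ℝ) ≤ 2),
    ENNReal.ofReal_ofNat] at hsum
  exact ((ENNReal.mul_right_inj h2n h2t).mp hsum).symm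

theorem volume_all_peaks (n : ℕ) (hn : 2 ≤ n) :
    volume (⋃ s ∈ Signs n, peak n s) = volume (crossPolytope n) / ((n : ℝ≥0∞) - 1) ∧
    volume (crossPolytope n ∪ ⋃ s ∈ Signs n, peak n s) =
      ((n : ℝ≥0∞) / ((n : ℝ≥0∞) - 1)) * volume (crossPolytope n) ∧
    volume (crossPolytope n ∪ ⋃ s ∈ Signs n, peak n s) =
      ENNReal.ofReal (2 ^ n / (((n : ℝ) - 1) * (n - 1).factorial)) := by
  have hn1 : 1 ≤ n := by omega
  have hfacpos : (0:ℝ) < (n.factorial : ℝ) := by exact_mod_cast n.factorial_pos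
  have hfacne : (n.factorial : ℝ) ≠ 0 := ne_of_gt hfacpos
  have hnsub := nsub_pos hn
  have hpk : ∀ s ∈ Signs n, volume (peak n s)
      = ENNReal.ofReal (((n:ℝ)-1)⁻¹ * (1 / n.factorial)) := by
    intro s hs
    rw [peak_eq_image]
    have himg : ⇑(peakAff n s) =
        (fun y => y + ((n:ℝ)-1)⁻¹ • s) ∘ ⇑(Matrix.toLin' (peakMat n s)) := by
      funext x; simp [peakAff_apply]
    rw [himg, Set.image_comp, Set.image_add_right, measure_preimage_add_right,
      MeasureTheory.Measure.addHaar_image_linearMap, LinearMap.det_toLin',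
      peakMat_det n hn hs, volume_stdCorner n hn1, ← ENNReal.ofReal_mul (by positivity)]
  have hU : (⋃ s ∈ Signs n, peak n s) = ⋃ s ∈ signFinset n, peak n s := by
    rw [← coe_signFinset n]; simp only [Finset.mem_coe]
  have hpkm : ∀ s ∈ signFinset n, MeasurableSet (peak n s) := by
    intro s _
    apply IsCompact.measurableSet
    exact Set.Finite.isCompact_convexHull ℝ ((Set.finite_range _).union (Set.finite_singleton _))
  have hdisj : Set.Pairwise (signFinset n : Set (Fin n → ℝ))
      (Function.onFun (MeasureTheory.AEDisjoint volume) fun s => peak n s) := by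
    intro s hsF s' hsF' hne
    have hsS : s ∈ Signs n := by rw [← coe_signFinset]; exact hsF
    have hsS' : s' ∈ Signs n := by rw [← coe_signFinset]; exact hsF'
    obtain ⟨i, hi⟩ : ∃ i, s i ≠ s' i := by
      by_contra h; push_neg at h; exact hne (funext h)
    apply measure_mono_null _ (coord_hyperplane_null n i)
    rintro x ⟨hx1, hx2⟩
    have h1 := peak_subset_coord n hn hsS i hx1
    have h2 := peak_subset_coord n hn hsS' i hx2
    simp only [mem_setOf_eq] at h1 h2 ⊢
    rcases hsS i with h | h <;> rcases hsS' i with h' | h' <;> rw [h] at h1 <;> rw [h'] at h2 <;>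
      first
        | (exfalso; exact hi (h.trans h'.symm))
        | linarith
  have hUvol : volume (⋃ s ∈ Signs n, peak n s)
      = ENNReal.ofReal (2^n * (((n:ℝ)-1)⁻¹ * (1 / n.factorial))) := by
    rw [hU, measure_biUnion_finset₀ hdisj (fun s hs => (hpkm s hs).nullMeasurableSet),
      Finset.sum_congr rfl (fun s hsF => hpk s (by rw [← coe_signFinset]; exact hsF)),
      Finset.sum_const, card_signFinset, nsmul_eq_mul, Nat.cast_pow, Nat.cast_ofNat,
      show ((2:ℝ≥0∞)^n) = ENNReal.ofReal ((2:ℝ)^n) by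
        rw [ENNReal.ofReal_pow (by norm_num : (0:ℝ) ≤ 2), ENNReal.ofReal_ofNat],
      ← ENNReal.ofReal_mul (by positivity)]
  have hcross : volume (crossPolytope n) = ENNReal.ofReal (2 ^ n / n.factorial) := by
    rw [crossPolytope_eq n hn1, volB n hn1]
  have hsub : ((n:ℝ≥0∞) - 1) = ENNReal.ofReal ((n:ℝ) - 1) := by
    rw [ENNReal.ofReal_sub _ (zero_le_one), ENNReal.ofReal_natCast, ENNReal.ofReal_one]
  have haed : MeasureTheory.AEDisjoint volume (crossPolytope n) (⋃ s ∈ Signs n, peak n s) := by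
    rw [hU]
    refine measure_mono_null
      (t := ⋃ s ∈ signFinset n, {x : Fin n → ℝ | ∑ i, s i * x i = 1}) ?_ ?_
    · rw [Set.inter_iUnion₂]
      refine Set.iUnion₂_mono fun s hsF => ?_
      rintro x ⟨hx1, hx2⟩
      have hsS : s ∈ Signs n := by rw [← coe_signFinset]; exact hsF
      exact le_antisymm (cross_subset_facet n hsS hx1) (peak_subset_facet n hn hsS hx2)
    · simp only [← Finset.mem_coe]
      rw [measure_biUnion_null_iff (Finset.countable_toSet _)]
      intro s hsF
      exact facet_hyperplane_null n hn (by rw [← coe_signFinset]; exact hsF)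
  have hunion : volume (crossPolytope n ∪ ⋃ s ∈ Signs n, peak n s)
      = ENNReal.ofReal (2^n / n.factorial + 2^n * (((n:ℝ)-1)⁻¹ * (1 / n.factorial))) := by
    have hmU : NullMeasurableSet (⋃ s ∈ Signs n, peak n s) volume := by
      rw [hU]
      exact (MeasurableSet.biUnion (Finset.countable_toSet _) hpkm).nullMeasurableSet
    rw [measure_union₀ hmU haed, hcross, hUvol,
      ← ENNReal.ofReal_add (by positivity) (by positivity)]
  have hm : (n.factorial : ℝ) = n * (n-1).factorial := by
    exact_mod_cast (Nat.mul_factorial_pred (by omega : n ≠ 0)).symm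
  have hnne : (n:ℝ) ≠ 0 := by positivity
  have hfac1ne : ((n-1).factorial : ℝ) ≠ 0 := by
    have : (0:ℝ) < ((n-1).factorial : ℝ) := by exact_mod_cast (n-1).factorial_pos
    exact ne_of_gt this
  refine ⟨?_, ?_, ?_⟩
  · rw [hUvol, hcross, hsub, ← ENNReal.ofReal_div_of_pos hnsub]
    congr 1
    field_simp
  · rw [hunion, hcross, hsub, show ((n:ℝ≥0∞)) = ENNReal.ofReal ((n:ℝ)) from
      (ENNReal.ofReal_natCast n).symm, ← ENNReal.ofReal_div_of_pos hnsub,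
      ← ENNReal.ofReal_mul (by positivity)]
    congr 1
    field_simp
    ring
  · rw [hunion]
    congr 1
    rw [hm]
    field_simp
    ring
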